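/- arXiv:2510.25968 — 2 statements merged into one kernel-verified Lean document; each statement's English description precedes it below -/
import Mathlib

section
/- Let n ≥ 3 and let S_n = {s₁,…,s_{n+1}} be unit vectors in ℝⁿ with ⟨sᵢ,s_j⟩ = −1/n for all i ≠ j (vertices of a regular simplex inscribed in S^{n−1}). If arccos(1/n) ≤ θ ≤ π/2, then the closed spherical caps C[sᵢ,θ], 1 ≤ i ≤ n+1, cover the whole sphere: ⋃_{i=1}^{n+1} C[sᵢ,θ] = S^{n−1}. -/
open MeasureTheory Metric Set Real

/-- The uniform (rotation-invariant) probability measure `σ` on the unit sphere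
`S^{n-1} ⊆ ℝⁿ`, obtained by normalizing the surface measure. -/
noncomputable def sphereSigma (n : ℕ) :
    Measure (sphere (0 : EuclideanSpace ℝ (Fin n)) 1) :=
  (((volume : Measure (EuclideanSpace ℝ (Fin n))).toSphere) Set.univ)⁻¹ •
    ((volume : Measure (EuclideanSpace ℝ (Fin n))).toSphere)

/-- The closed spherical cap `C[x,φ] = {y ∈ S^{n-1} : ⟨x,y⟩ ≥ cos φ}`. -/
noncomputable def closedCap (n : ℕ) (x : EuclideanSpace ℝ (Fin n)) (φ : ℝ) :
    Set (sphere (0 : EuclideanSpace ℝ (Fin n)) 1) :=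
  {y | Real.cos φ ≤ (inner ℝ x (y : EuclideanSpace ℝ (Fin n)) : ℝ)}

/-- Caps of radius `arccos(1/n) ≤ θ ≤ π/2` centered at the `n+1` vertices of a regular
simplex inscribed in `S^{n-1}` cover the whole sphere. -/
theorem simplex_caps_cover (n : ℕ) (hn : 3 ≤ n)
    (s : Fin (n + 1) → EuclideanSpace ℝ (Fin n)) (hs : ∀ i, ‖s i‖ = 1)
    (hangle : ∀ i j, i ≠ j → (inner ℝ (s i) (s j) : ℝ) = -1 / n)
    (θ : ℝ) (hθ0 : Real.arccos (1 / n) ≤ θ) (hθ : θ ≤ π / 2) :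
    (⋃ i, closedCap n (s i) θ) = Set.univ := by
  have hn0 : (n : ℝ) ≠ 0 := by positivity
  have h3 : (3:ℝ) ≤ n := by exact_mod_cast hn
  have hself : ∀ i, (inner ℝ (s i) (s i) : ℝ) = 1 := by
    intro i; rw [real_inner_self_eq_norm_sq, hs]; norm_num
  -- the vertices sum to zero
  have hsum : ∑ i, s i = 0 := by
    have hrow : ∀ i, (inner ℝ (s i) (∑ j, s j) : ℝ) = 0 := by
      intro i
      rw [inner_sum]
      rw [← Finset.add_sum_erase _ _ (Finset.mem_univ i), hself]
      rw [Finset.sum_congr rfl (fun j hj => hangle i j (by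
        simp only [Finset.mem_erase] at hj; exact (Ne.symm hj.1)))]
      simp only [Finset.sum_const, Finset.card_erase_of_mem (Finset.mem_univ i),
        Finset.card_univ, Fintype.card_fin, Nat.add_sub_cancel, nsmul_eq_mul, smul_eq_mul]
      field_simp
      norm_num
    have : (inner ℝ (∑ i, s i) (∑ j, s j) : ℝ) = 0 := by
      rw [sum_inner]
      exact Finset.sum_eq_zero fun i _ => hrow i
    exact inner_self_eq_zero.mp this
  -- the vertices span the whole space
  have hspan : Submodule.span ℝ (Set.range s) = ⊤ := by
    set t : Fin n → EuclideanSpace ℝ (Fin n) := fun i => s i.castSucc with ht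
    have hli : LinearIndependent ℝ t := by
      rw [Fintype.linearIndependent_iff]
      intro g hg
      have key : ∀ j : Fin n, g j * (1 + 1/n) = (∑ i, g i) * (1/n) := by
        intro j
        have h0 : (inner ℝ (t j) (∑ i, g i • t i) : ℝ) = 0 := by rw [hg, inner_zero_right]
        rw [inner_sum] at h0
        simp only [real_inner_smul_right] at h0
        rw [← Finset.add_sum_erase _ _ (Finset.mem_univ j)] at h0
        rw [Finset.sum_congr rfl (fun i hi => by
          rw [hangle j.castSucc i.castSucc (by
            simp only [Finset.mem_erase] at hi
            exact fun h => hi.1 (Fin.castSucc_injective n h).symm)])] at h0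
        rw [hself] at h0
        rw [← Finset.sum_mul, Finset.sum_erase_eq_sub (Finset.mem_univ j)] at h0
        field_simp at h0 ⊢
        linarith
      have hS : (∑ i, g i) = 0 := by
        have := Finset.sum_congr rfl (fun j (_ : j ∈ Finset.univ) => key j)
        rw [← Finset.sum_mul, ← Finset.sum_mul, Finset.sum_const, Finset.card_univ,
          Fintype.card_fin, nsmul_eq_mul] at this
        field_simp at this
        linarith
      intro j
      have := key j
      rw [hS] at this
      have h1 : (0:ℝ) < 1 + 1/n := by positivity
      nlinarith [this]
    have hcard : Module.finrank ℝ (Submodule.span ℝ (Set.range t)) = n := by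
      rw [finrank_span_eq_card hli, Fintype.card_fin]
    have htop : Submodule.span ℝ (Set.range t) = ⊤ := by
      apply Submodule.eq_top_of_finrank_eq
      rw [hcard, finrank_euclideanSpace_fin]
    exact top_le_iff.mp (htop ▸ Submodule.span_mono
      (by rintro _ ⟨i, rfl⟩; exact ⟨i.castSucc, rfl⟩))
  -- frame identity : ∑ ⟨s i, y⟩ • s i = ((n+1)/n) • y
  have hframe : ∀ y : EuclideanSpace ℝ (Fin n),
      ∑ i, (inner ℝ (s i) y : ℝ) • s i = (((n:ℝ) + 1)/n) • y := by
    set F : EuclideanSpace ℝ (Fin n) →ₗ[ℝ] EuclideanSpace ℝ (Fin n) :=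
      ∑ i, LinearMap.smulRight (innerSL ℝ (s i) : EuclideanSpace ℝ (Fin n) →L[ℝ] ℝ).toLinearMap (s i) with hF
    have hFapp : ∀ y, F y = ∑ i, (inner ℝ (s i) y : ℝ) • s i := by
      intro y
      simp [hF, LinearMap.sum_apply]
    have hFG : F = (((n:ℝ) + 1)/n) • LinearMap.id := by
      apply LinearMap.ext_on hspan
      rintro _ ⟨j, rfl⟩
      rw [hFapp]
      rw [← Finset.add_sum_erase _ _ (Finset.mem_univ j), hself]
      rw [Finset.sum_congr rfl (fun i hi => by
        rw [hangle i j (by simp only [Finset.mem_erase] at hi; exact hi.1)])]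
      rw [← Finset.smul_sum, Finset.sum_erase_eq_sub (Finset.mem_univ j), hsum]
      simp only [LinearMap.smul_apply, LinearMap.id_apply, one_smul, zero_sub, smul_neg]
      rw [← neg_smul, neg_div, neg_neg,
        show ((n:ℝ)+1)/n = 1 + 1/n from by field_simp, add_smul, one_smul]
    intro y
    rw [← hFapp, hFG]
    simp
  -- main argument
  ext y
  simp only [Set.mem_iUnion, Set.mem_univ, iff_true, closedCap, Set.mem_setOf_eq]
  obtain ⟨y, hy⟩ := y
  simp only [mem_sphere_zero_iff_norm] at hy
  -- sum of inner products is 0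
  have hsum0 : ∑ i, (inner ℝ (s i) y : ℝ) = 0 := by
    rw [← sum_inner, hsum, inner_zero_left]
  -- sum of squares is (n+1)/n
  have hsq : ∑ i, (inner ℝ (s i) y : ℝ)^2 = ((n:ℝ) + 1)/n := by
    have := congrArg (fun z => (inner ℝ z y : ℝ)) (hframe y)
    simp only [sum_inner, real_inner_smul_left] at this
    rw [real_inner_self_eq_norm_sq, hy] at this
    simp only [one_pow, mul_one] at this
    rw [← this]
    exact Finset.sum_congr rfl fun i _ => pow_two _
  -- each inner product is ≥ -1
  have hge : ∀ i, (-1:ℝ) ≤ inner ℝ (s i) y := by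
    intro i
    have := abs_real_inner_le_norm (s i) y
    rw [hs, hy, one_mul] at this
    linarith [abs_le.mp this]
  -- let m be the max
  obtain ⟨j, -, hj⟩ := Finset.exists_max_image Finset.univ
    (fun i => (inner ℝ (s i) y : ℝ)) ⟨0, Finset.mem_univ 0⟩
  set m : ℝ := inner ℝ (s j) y with hm
  have hub : ∀ i, (inner ℝ (s i) y : ℝ) ≤ m := fun i => hj i (Finset.mem_univ i)
  have hptw : ∀ i, (inner ℝ (s i) y : ℝ)^2 ≤ (m - 1) * (inner ℝ (s i) y : ℝ) + m := by
    intro i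
    nlinarith [hge i, hub i]
  have hbound : ((n:ℝ) + 1)/n ≤ ((n:ℝ) + 1) * m := by
    calc ((n:ℝ) + 1)/n = ∑ i, (inner ℝ (s i) y : ℝ)^2 := hsq.symm
      _ ≤ ∑ i, ((m - 1) * (inner ℝ (s i) y : ℝ) + m) :=
          Finset.sum_le_sum fun i _ => hptw i
      _ = (m - 1) * (∑ i, (inner ℝ (s i) y : ℝ)) + ((n:ℝ)+1) * m := by
          rw [Finset.sum_add_distrib, ← Finset.mul_sum, Finset.sum_const,
            Finset.card_univ, Fintype.card_fin, nsmul_eq_mul]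
          push_cast; ring
      _ = ((n:ℝ) + 1) * m := by rw [hsum0]; ring
  have hm1 : 1/(n:ℝ) ≤ m := by
    have hpos : (0:ℝ) < (n:ℝ) + 1 := by linarith
    rw [div_le_iff₀ (by linarith : (0:ℝ) < (n:ℝ))]
    have hb : ((n:ℝ)+1) ≤ ((n:ℝ)+1) * m * n := by
      have := mul_le_mul_of_nonneg_right hbound (show (0:ℝ) ≤ n by positivity)
      rwa [div_mul_cancel₀ _ hn0] at this
    nlinarith [hb, hpos]
  -- cos θ ≤ 1/n
  have hcos : Real.cos θ ≤ 1/n := by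
    have h1 : (-1:ℝ) ≤ 1/n := le_trans (by norm_num) (by positivity : (0:ℝ) ≤ 1/n)
    have h2 : (1:ℝ)/n ≤ 1 := by
      rw [div_le_one (by linarith : (0:ℝ) < n)]; linarith
    calc Real.cos θ ≤ Real.cos (Real.arccos (1/n)) :=
          Real.cos_le_cos_of_nonneg_of_le_pi (Real.arccos_nonneg _)
            (by linarith [Real.pi_pos]) hθ0
      _ = 1/n := Real.cos_arccos h1 h2
  exact ⟨j, by dsimp only; linarith⟩
end

section
/- Let K = ⋃_{i=1}^m conv({xᵢ} ∪ Bⁿ) be a cap body in ℝⁿ with vertices x₁,…,x_m, unit directions x̂ᵢ = xᵢ/‖xᵢ‖ and base-cap radii φᵢ = arccos(1/‖xᵢ‖). Suppose unit vectors v₁,…,v_k satisfy: (i) for each 1 ≤ i ≤ m, some v_j lies in the open cap C(−x̂ᵢ, π/2 − φᵢ); and (ii) the positive hull of {v₁,…,v_k} is all of ℝⁿ, i.e. every x ∈ ℝⁿ can be written as c₁v₁ + … + c_k v_k with all c_j > 0. Then the directions v₁,…,v_k illuminate K. -/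
open Metric Set Real
set_option maxHeartbeats 1000000

/-- The directions `v 0, …, v (k-1)` illuminate `K`: every boundary point of `K`
is moved into the interior of `K` by a positive multiple of some `v j`. -/
def Illuminates {n k : ℕ} (v : Fin k → EuclideanSpace ℝ (Fin n))
    (K : Set (EuclideanSpace ℝ (Fin n))) : Prop :=
  ∀ x ∈ frontier K, ∃ j : Fin k, ∃ t : ℝ, 0 < t ∧ x + t • v j ∈ interior K

lemma aux_trig (a c : ℝ) (ha : 1 < a)
    (h : Real.cos (π / 2 - Real.arccos (1 / a)) < a⁻¹ * c) :
    0 < c ∧ a ^ 2 - 1 < c ^ 2 := by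
  have ha0 : 0 < a := by linarith
  rw [Real.cos_pi_div_two_sub, Real.sin_arccos] at h
  have h2 : a * Real.sqrt (1 - (1 / a) ^ 2) < c := by
    have := (mul_lt_mul_iff_right₀ ha0).2 h
    rwa [show a * (a⁻¹ * c) = c by field_simp] at this
  have h3 : Real.sqrt (a ^ 2 - 1) = a * Real.sqrt (1 - (1 / a) ^ 2) := by
    rw [show a ^ 2 - 1 = a ^ 2 * (1 - (1 / a) ^ 2) by field_simp,
      Real.sqrt_mul (sq_nonneg a), Real.sqrt_sq ha0.le]
  have h4 : Real.sqrt (a ^ 2 - 1) < c := by rw [h3]; exact h2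
  have hc0 : 0 < c := lt_of_le_of_lt (Real.sqrt_nonneg _) h4
  refine ⟨hc0, ?_⟩
  calc a ^ 2 - 1 = Real.sqrt (a ^ 2 - 1) ^ 2 := (Real.sq_sqrt (by nlinarith)).symm
    _ < c ^ 2 := by
        apply pow_lt_pow_left₀ h4 (Real.sqrt_nonneg _)
        norm_num

/-- Sufficient condition for illumination of a cap body `K = ⋃ᵢ conv({xᵢ} ∪ Bⁿ)` by
unit directions `v₁, …, v_k`: (i) for each vertex `xᵢ` some `v_j` lies in the open cap
`C(−x̂ᵢ, π/2 − φᵢ)` (with `x̂ᵢ = xᵢ/‖xᵢ‖`, `φᵢ = arccos(1/‖xᵢ‖)`), and (ii) the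
positive hull of `{v₁,…,v_k}` is all of `ℝⁿ`. -/
theorem capBody_illuminates_of_caps_and_posHull (n m k : ℕ)
    (x : Fin m → EuclideanSpace ℝ (Fin n)) (hx : ∀ i, 1 < ‖x i‖)
    (K : Set (EuclideanSpace ℝ (Fin n)))
    (hK : K = ⋃ i, convexHull ℝ ({x i} ∪ closedBall (0 : EuclideanSpace ℝ (Fin n)) 1))
    (hconv : Convex ℝ K)
    (v : Fin k → EuclideanSpace ℝ (Fin n)) (hv : ∀ j, ‖v j‖ = 1)
    (h1 : ∀ i : Fin m, ∃ j : Fin k,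
      Real.cos (π / 2 - Real.arccos (1 / ‖x i‖)) <
        (inner ℝ (-(‖x i‖⁻¹ • x i)) (v j) : ℝ))
    (h2 : ∀ z : EuclideanSpace ℝ (Fin n), ∃ c : Fin k → ℝ,
      (∀ j, 0 < c j) ∧ z = ∑ j, c j • v j) :
    Illuminates v K := by
  intro p hp
  -- K is closed
  have hcap : ∀ y : EuclideanSpace ℝ (Fin n),
      IsCompact (convexHull ℝ ({y} ∪ closedBall (0 : EuclideanSpace ℝ (Fin n)) 1)) := by
    intro y
    have himg : convexHull ℝ ({y} ∪ closedBall (0 : EuclideanSpace ℝ (Fin n)) 1) =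
        (fun q : ℝ × EuclideanSpace ℝ (Fin n) => (1 - q.1) • y + q.1 • q.2) ''
          (Icc (0:ℝ) 1 ×ˢ closedBall 0 1) := by
      rw [Set.singleton_union, convexHull_insert ⟨0, mem_closedBall_self zero_le_one⟩,
        (convex_closedBall _ _).convexHull_eq]
      ext z
      simp only [mem_convexJoin, mem_singleton_iff, segment_eq_image, mem_image,
        Set.mem_prod, exists_prop]
      constructor
      · rintro ⟨u, rfl, b, hb, θ, hθ, rfl⟩
        exact ⟨(θ, b), ⟨hθ, hb⟩, rfl⟩
      · rintro ⟨⟨θ, b⟩, ⟨hθ, hb⟩, rfl⟩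
        exact ⟨y, rfl, b, hb, θ, hθ, rfl⟩
    rw [himg]
    exact ((isCompact_Icc).prod (isCompact_closedBall _ _)).image (by fun_prop)
  have hKcl : IsClosed K := by
    rw [hK]
    exact (isCompact_iUnion fun i => hcap (x i)).isClosed
  have hpK : p ∈ K := hKcl.frontier_subset hp
  have hpK' := hpK
  rw [hK] at hpK'
  obtain ⟨i0, hi0⟩ := mem_iUnion.mp hpK'
  -- the unit ball is in the interior of K
  have hballK : ball (0 : EuclideanSpace ℝ (Fin n)) 1 ⊆ K := by
    rw [hK]
    refine subset_trans ball_subset_closedBall (subset_trans ?_ (subset_iUnion _ i0))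
    exact subset_trans subset_union_right (subset_convexHull ℝ _)
  have hballint : ball (0 : EuclideanSpace ℝ (Fin n)) 1 ⊆ interior K :=
    interior_maximal hballK isOpen_ball
  have hpnotint : p ∉ interior K := hp.2
  by_cases hnorm : 1 < ‖p‖
  · -- p is on a conical part: use the cap direction for the vertex
    rw [Set.singleton_union, convexHull_insert ⟨0, mem_closedBall_self zero_le_one⟩,
      (convex_closedBall _ _).convexHull_eq] at hi0
    obtain ⟨u, hu, b, hb, hpb⟩ := (mem_convexJoin).mp hi0
    rw [mem_singleton_iff] at hu
    subst hu
    obtain ⟨σ, τ, hσ, hτ, hστ, hcomb⟩ := hpb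
    have hσpos : 0 < σ := by
      rcases lt_or_eq_of_le hσ with h' | h'
      · exact h'
      · exfalso
        have : p = b := by
          rw [← hcomb, ← h']
          have : τ = 1 := by linarith
          simp [this]
        rw [this] at hnorm
        have : ‖b‖ ≤ 1 := mem_closedBall_zero_iff.mp hb
        linarith
    obtain ⟨j, hj⟩ := h1 i0
    set a : ℝ := ‖x i0‖ with ha_def
    set c : ℝ := -(inner ℝ (x i0) (v j) : ℝ) with hc_def
    have hj' : Real.cos (π / 2 - Real.arccos (1 / a)) < a⁻¹ * c := by
      have : (inner ℝ (-(a⁻¹ • x i0)) (v j) : ℝ) = a⁻¹ * c := by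
        rw [inner_neg_left, real_inner_smul_left, hc_def]; ring
      rw [← this]; exact hj
    obtain ⟨hcpos, hc2⟩ := aux_trig a c (hx i0) hj'
    refine ⟨j, σ * c, mul_pos hσpos hcpos, ?_⟩
    apply hballint
    rw [mem_ball_zero_iff]
    have key : ‖σ • x i0 + (σ * c) • v j‖ < σ := by
      have hsq : ‖σ • x i0 + (σ * c) • v j‖ ^ 2 < σ ^ 2 := by
        rw [norm_add_sq_real, norm_smul, norm_smul, real_inner_smul_left,
          real_inner_smul_right, hv j]
        have hinner : (inner ℝ (x i0) (v j) : ℝ) = -c := by rw [hc_def]; ring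
        rw [hinner]
        rw [Real.norm_eq_abs, Real.norm_eq_abs, abs_of_nonneg hσ,
          abs_of_nonneg (mul_nonneg hσ hcpos.le)]
        have ha2 : ‖x i0‖ = a := rfl
        rw [ha2]
        nlinarith [mul_pos hσpos hσpos]
      have := lt_of_pow_lt_pow_left₀ 2 hσ hsq
      exact this
    have hrw : p + (σ * c) • v j = (σ • x i0 + (σ * c) • v j) + τ • b := by
      rw [← hcomb]; abel
    rw [hrw]
    calc ‖(σ • x i0 + (σ * c) • v j) + τ • b‖
        ≤ ‖σ • x i0 + (σ * c) • v j‖ + ‖τ • b‖ := norm_add_le _ _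
      _ < σ + τ := by
          have hbn : ‖τ • b‖ ≤ τ := by
            rw [norm_smul, Real.norm_eq_abs, abs_of_nonneg hτ]
            have : ‖b‖ ≤ 1 := mem_closedBall_zero_iff.mp hb
            nlinarith
          linarith
      _ = 1 := hστ
  · -- p is on the sphere: use the positive hull condition
    have hp1 : ‖p‖ = 1 := by
      push_neg at hnorm
      refine le_antisymm hnorm ?_
      by_contra h
      push_neg at h
      exact hpnotint (hballint (mem_ball_zero_iff.mpr h))
    obtain ⟨c, hcpos, hsum⟩ := h2 (-p)
    have hsum' : (inner ℝ p (-p) : ℝ) = ∑ j, c j * (inner ℝ p (v j) : ℝ) := by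
      rw [hsum, inner_sum]
      congr 1
      ext j
      rw [real_inner_smul_right]
    have hneg1 : (inner ℝ p (-p) : ℝ) = -1 := by
      rw [inner_neg_right, real_inner_self_eq_norm_sq, hp1]
      norm_num
    have hex : ∃ j, (inner ℝ p (v j) : ℝ) < 0 := by
      by_contra h
      push_neg at h
      have : (0 : ℝ) ≤ ∑ j, c j * (inner ℝ p (v j) : ℝ) :=
        Finset.sum_nonneg fun j _ => mul_nonneg (hcpos j).le (h j)
      rw [← hsum', hneg1] at this
      linarith
    obtain ⟨j, hj⟩ := hex
    refine ⟨j, -(inner ℝ p (v j) : ℝ), by linarith, ?_⟩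
    apply hballint
    rw [mem_ball_zero_iff]
    set t : ℝ := -(inner ℝ p (v j) : ℝ) with ht
    have htpos : 0 < t := by rw [ht]; linarith
    have hsq : ‖p + t • v j‖ ^ 2 < 1 ^ 2 := by
      rw [norm_add_sq_real, real_inner_smul_right, norm_smul, hv j, hp1,
        Real.norm_eq_abs, abs_of_nonneg htpos.le]
      have : (inner ℝ p (v j) : ℝ) = -t := by rw [ht]; ring
      rw [this]
      nlinarith
    exact lt_of_pow_lt_pow_left₀ 2 zero_le_one hsq
end
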